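/- Let σ be the n-cycle (n, n-1, ..., 1) and let φ: G₁ⁿ → G₁ⁿ be defined by (g₁,...,gₙ) ↦ (φₙ(gₙ), φ₁(g₁), ..., φₙ₋₁(gₙ₋₁)) for automorphisms φᵢ of a group G₁. Then Fix(φ) = {(g, φ₁(g), φ₂φ₁(g), ..., φₙ₋₁⋯φ₁(g)) : g ∈ Fix(φₙ⋯φ₁)}, and in particular Fix(φ) is isomorphic to Fix(φₙ∘⋯∘φ₁). -/

import Mathlib

/-- The fixed subgroup of an endomorphism of a group. -/
def fixedSubgroup {G : Type*} [Group G] (φ : G →* G) : Subgroup G where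
  carrier := {g : G | φ g = g}
  one_mem' := map_one φ
  mul_mem' := by
    intro x y hx hy
    simp only [Set.mem_setOf_eq, map_mul] at *
    rw [hx, hy]
  inv_mem' := by
    intro x hx
    simp only [Set.mem_setOf_eq, map_inv] at *
    rw [hx]

/-- The automorphism of `G₁ⁿ` given by applying `f i` coordinate-wise and then
cyclically shifting the coordinates: `(g₁, …, gₙ) ↦ (fₙ gₙ, f₁ g₁, …, f_{n-1} g_{n-1})`. -/
def cycShift {G₁ : Type*} [Group G₁] (n : ℕ) [NeZero n] (f : Fin n → (G₁ ≃* G₁)) :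
    (Fin n → G₁) →* (Fin n → G₁) where
  toFun g i := f (i - 1) (g (i - 1))
  map_one' := by funext i; simp
  map_mul' := by intro g h; funext i; simp

/-- For the automorphism `φ : (g₁, …, gₙ) ↦ (fₙ gₙ, f₁ g₁, …, f_{n-1} g_{n-1})` of `G₁ⁿ`,
`Fix φ = {(g, f₁ g, f₂ f₁ g, …, f_{n-1} ⋯ f₁ g) : g ∈ Fix (fₙ ⋯ f₁)}`; in particular
`Fix φ` is isomorphic to `Fix (fₙ ∘ ⋯ ∘ f₁)`. Here `c k` denotes the composition
`f_k ∘ ⋯ ∘ f₁` (so `c 0 = id` and `c n = fₙ ∘ ⋯ ∘ f₁`). -/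
theorem fix_cyclic_shift {G₁ : Type*} [Group G₁] (n : ℕ) [NeZero n]
    (f : Fin n → (G₁ ≃* G₁)) (c : ℕ → (G₁ →* G₁))
    (hc0 : c 0 = MonoidHom.id G₁)
    (hcs : ∀ k : Fin n, c (k.val + 1) = (f k).toMonoidHom.comp (c k.val)) :
    (∀ g : Fin n → G₁, cycShift n f g = g ↔
      ∃ x : G₁, c n x = x ∧ ∀ i : Fin n, g i = c i.val x) ∧
    Nonempty (↥(fixedSubgroup (cycShift n f)) ≃* ↥(fixedSubgroup (c n))) := by
  have hn : 0 < n := Nat.pos_of_ne_zero (NeZero.ne n)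
  have hcs' : ∀ (k : Fin n) (x : G₁), c (k.val + 1) x = f k (c k.val x) := by
    intro k x
    rw [hcs k]; rfl
  have hval : ∀ j : Fin n, ((j + 1 : Fin n)).val = (j.val + 1) % n := by
    intro j
    rw [Fin.add_def, Fin.val_one']
    exact Nat.add_mod_mod _ _ _
  have hzero : ((0 : Fin n)).val = 0 := Fin.val_zero n
  -- reformulation of the fixed-point equation
  have hiff : ∀ g : Fin n → G₁,
      cycShift n f g = g ↔ ∀ j : Fin n, g (j + 1) = f j (g j) := by
    intro g
    constructor
    · intro hg j
      have := congrFun hg (j + 1)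
      rw [show (cycShift n f g) (j + 1) = f (j + 1 - 1) (g (j + 1 - 1)) from rfl,
        add_sub_cancel_right] at this
      exact this.symm
    · intro h
      funext i
      have := (h (i - 1)).symm
      rwa [sub_add_cancel] at this
  have key : ∀ g : Fin n → G₁, cycShift n f g = g ↔
      ∃ x : G₁, c n x = x ∧ ∀ i : Fin n, g i = c i.val x := by
    intro g
    rw [hiff]
    constructor
    · intro hg'
      have step : ∀ (k : ℕ) (hk : k < n), g ⟨k, hk⟩ = c k (g 0) := by
        intro k
        induction k with
        | zero => intro hk; rw [hc0]; exact congrArg g (Fin.ext hzero.symm)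
        | succ k ih =>
          intro hk
          have hk' : k < n := Nat.lt_of_succ_lt hk
          have heq : (⟨k, hk'⟩ : Fin n) + 1 = ⟨k + 1, hk⟩ := by
            apply Fin.ext
            rw [hval]
            exact Nat.mod_eq_of_lt hk
          rw [← heq, hg' ⟨k, hk'⟩, ih hk', ← hcs' ⟨k, hk'⟩]
      have hlast : n - 1 < n := by omega
      have hx : c n (g 0) = g 0 := by
        have h1 : (⟨n - 1, hlast⟩ : Fin n) + 1 = 0 := by
          apply Fin.ext
          rw [hval, Nat.sub_add_cancel hn, Nat.mod_self]
          exact hzero.symm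
        have := hg' ⟨n - 1, hlast⟩
        rw [h1, step (n - 1) hlast, ← hcs' ⟨n - 1, hlast⟩] at this
        rw [show (n - 1) + 1 = n from Nat.sub_add_cancel hn] at this
        exact this.symm
      exact ⟨g 0, hx, fun i => step i.val i.isLt⟩
    · rintro ⟨x, hx, hgx⟩
      intro j
      rw [hgx, hgx j, ← hcs' j, hval]
      rcases Nat.lt_or_ge (j.val + 1) n with h | h
      · rw [Nat.mod_eq_of_lt h]
      · have hj : j.val + 1 = n := by have := j.isLt; omega
        rw [hj, Nat.mod_self, hx, hc0]
        rfl
  refine ⟨key, ⟨?_⟩⟩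
  have mem1 : ∀ g : Fin n → G₁, g ∈ fixedSubgroup (cycShift n f) ↔ cycShift n f g = g :=
    fun g => Iff.rfl
  have mem2 : ∀ x : G₁, x ∈ fixedSubgroup (c n) ↔ c n x = x := fun x => Iff.rfl
  refine
    { toFun := fun g => ⟨g.1 0, ?_⟩
      invFun := fun x => ⟨fun i => c i.val x.1, ?_⟩
      left_inv := ?_
      right_inv := ?_
      map_mul' := ?_ }
  · obtain ⟨x, hx, hgx⟩ := (key g.1).mp g.2
    have h0 : g.1 0 = x := by rw [hgx 0, hzero, hc0]; rfl
    rw [mem2, h0]; exact hx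
  · rw [mem1, key]
    exact ⟨x.1, x.2, fun i => rfl⟩
  · rintro ⟨g, hg⟩
    ext i
    obtain ⟨x, hx, hgx⟩ := (key g).mp hg
    have h0 : g 0 = x := by rw [hgx 0, hzero, hc0]; rfl
    simp only [h0, (hgx i).symm]
  · rintro ⟨x, hx⟩
    ext
    simp only [hzero, hc0]
    rfl
  · intro g h
    rfl
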